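/- Let ∇₁ξ(x,k) = α ∂_x ξ(x,k) and ∇₂ξ(x,k) = (βx + γk)ξ(x,k) on the left module E_ℏ with parameters λ₀ ≠ 0, λ₁, ε, r (λ₀ε + λ₁r = −ℏ). If α = 1/λ₀ and βε + γr = 2πi, then ∇ is a left connection: ∇_j(f·ξ) = f·(∇_jξ) + (∂_j f)·ξ for j = 1,2; moreover its curvature is constant: (∇₁∇₂ − ∇₂∇₁)ξ = αβ ξ. -/

import Mathlib

/-- The left action `(f·ξ)(x,k) = ∑_n f_n(λ₀x + λ₁k) ξ(x − nε, k − nr)`. -/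
noncomputable def leftAct (l0 l1 ε : ℝ) (r : ℤ) (f : ℤ → ℝ → ℂ) (ξ : ℝ → ℤ → ℂ) :
    ℝ → ℤ → ℂ :=
  fun x k => ∑' n : ℤ, f n (l0 * x + l1 * k) * ξ (x - n * ε) (k - n * r)

/-- `∂₁ f = ∑_n f_n'(u) W^n`. -/
noncomputable def d1 (f : ℤ → ℝ → ℂ) : ℤ → ℝ → ℂ := fun n u => deriv (f n) u

/-- `∂₂ f = 2πi ∑_n n f_n(u) W^n`. -/
noncomputable def d2 (f : ℤ → ℝ → ℂ) : ℤ → ℝ → ℂ :=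
  fun n u => 2 * Real.pi * Complex.I * n * f n u

/-- `∇₁ξ(x,k) = α ∂ₓξ(x,k)`. -/
noncomputable def nabla1 (α : ℂ) (ξ : ℝ → ℤ → ℂ) : ℝ → ℤ → ℂ :=
  fun x k => α * deriv (fun y => ξ y k) x

/-- `∇₂ξ(x,k) = (βx + γk) ξ(x,k)`. -/
noncomputable def nabla2 (β γ : ℂ) (ξ : ℝ → ℤ → ℂ) : ℝ → ℤ → ℂ :=
  fun x k => (β * (x : ℂ) + γ * (k : ℂ)) * ξ x k

/-- If `α = 1/λ₀` and `βε + γr = 2πi`, then `∇` is a left connection on `E_ℏ`,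
and its curvature is the constant `αβ`. -/
theorem nabla_left_connection (ℏ l0 l1 ε : ℝ) (r : ℤ) (α β γ : ℂ)
    (hl0 : l0 ≠ 0) (hpar : l0 * ε + l1 * r = -ℏ)
    (hα : α = 1 / (l0 : ℂ))
    (hβγ : β * (ε : ℂ) + γ * (r : ℂ) = 2 * Real.pi * Complex.I)
    (f : ℤ → ℝ → ℂ) (hfin : (Function.support f).Finite)
    (hf : ∀ n, Differentiable ℝ (f n))
    (ξ : ℝ → ℤ → ℂ) (hξ : ∀ k : ℤ, Differentiable ℝ fun x => ξ x k) :
    (∀ x k, nabla1 α (leftAct l0 l1 ε r f ξ) x k =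
        leftAct l0 l1 ε r f (nabla1 α ξ) x k + leftAct l0 l1 ε r (d1 f) ξ x k) ∧
    (∀ x k, nabla2 β γ (leftAct l0 l1 ε r f ξ) x k =
        leftAct l0 l1 ε r f (nabla2 β γ ξ) x k + leftAct l0 l1 ε r (d2 f) ξ x k) ∧
    (∀ x k, nabla1 α (nabla2 β γ ξ) x k - nabla2 β γ (nabla1 α ξ) x k =
        α * β * ξ x k) := by
  classical
  have hl0c : (l0 : ℂ) ≠ 0 := by exact_mod_cast hl0
  set s := hfin.toFinset with hs
  have hsupp : ∀ n ∉ s, f n = 0 := by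
    intro n hn
    by_contra h
    exact hn (hfin.mem_toFinset.mpr h)
  have hAct : ∀ (g : ℤ → ℝ → ℂ), (∀ n ∉ s, g n = 0) → ∀ (η : ℝ → ℤ → ℂ) (x : ℝ) (k : ℤ),
      leftAct l0 l1 ε r g η x k
        = ∑ n ∈ s, g n (l0 * x + l1 * k) * η (x - n * ε) (k - n * r) := by
    intro g hg η x k
    exact tsum_eq_sum (fun n hn => by rw [hg n hn]; simp)
  have hd1 : ∀ n ∉ s, d1 f n = 0 := by
    intro n hn; funext u
    simp only [d1, hsupp n hn]
    exact deriv_const u 0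
  have hd2 : ∀ n ∉ s, d2 f n = 0 := by
    intro n hn; funext u; simp [d2, hsupp n hn]
  refine ⟨?_, ?_, ?_⟩
  · -- part 1
    intro x k
    have h1 : ∀ n : ℤ, HasDerivAt (fun y : ℝ => f n (l0 * y + l1 * (k : ℝ)))
        ((l0 : ℂ) * deriv (f n) (l0 * x + l1 * (k : ℝ))) x := by
      intro n
      have hin : HasDerivAt (fun y : ℝ => l0 * y + l1 * (k : ℝ)) l0 x := by
        simpa using ((hasDerivAt_id x).const_mul l0).add_const (l1 * (k : ℝ))
      have := ((hf n (l0 * x + l1 * (k : ℝ))).hasDerivAt).scomp x hin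
      simpa [Complex.real_smul, mul_comm, Function.comp_def] using this
    have h2 : ∀ n : ℤ, HasDerivAt (fun y : ℝ => ξ (y - n * ε) (k - n * r))
        (deriv (fun y => ξ y (k - n * r)) (x - n * ε)) x := by
      intro n
      have hin : HasDerivAt (fun y : ℝ => y - (n : ℝ) * ε) 1 x := by
        simpa using (hasDerivAt_id x).sub_const ((n : ℝ) * ε)
      have := ((hξ (k - n * r) (x - (n : ℝ) * ε)).hasDerivAt).scomp x hin
      simpa [Function.comp_def] using this
    have hsum : HasDerivAt (fun y : ℝ => ∑ n ∈ s,
        f n (l0 * y + l1 * (k : ℝ)) * ξ (y - n * ε) (k - n * r))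
        (∑ n ∈ s, ((l0 : ℂ) * deriv (f n) (l0 * x + l1 * (k : ℝ)) * ξ (x - n * ε) (k - n * r)
          + f n (l0 * x + l1 * (k : ℝ)) * deriv (fun y => ξ y (k - n * r)) (x - n * ε))) x :=
      HasDerivAt.fun_sum (fun n _ => (h1 n).fun_mul (h2 n))
    have hfun : (fun y => leftAct l0 l1 ε r f ξ y k)
        = fun y => ∑ n ∈ s, f n (l0 * y + l1 * (k : ℝ)) * ξ (y - n * ε) (k - n * r) :=
      funext fun y => hAct f hsupp ξ y k
    simp only [nabla1]
    rw [hfun, hsum.deriv, hAct f hsupp _ x k, hAct (d1 f) hd1 ξ x k,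
      Finset.mul_sum, ← Finset.sum_add_distrib]
    refine Finset.sum_congr rfl fun n _ => ?_
    simp only [nabla1, d1, hα]
    field_simp
    ring
  · -- part 2
    intro x k
    simp only [nabla2]
    rw [hAct f hsupp ξ x k, hAct f hsupp _ x k, hAct (d2 f) hd2 ξ x k,
      Finset.mul_sum, ← Finset.sum_add_distrib]
    refine Finset.sum_congr rfl fun n _ => ?_
    simp only [nabla2, d2]
    push_cast
    linear_combination ((n : ℂ) * f n (l0 * x + l1 * (k : ℝ)) * ξ (x - n * ε) (k - n * r)) * hβγ
  · -- part 3
    intro x k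
    simp only [nabla1, nabla2]
    have hc : HasDerivAt (fun y : ℝ => β * (y : ℂ) + γ * (k : ℂ)) β x := by
      have : HasDerivAt (fun y : ℝ => (y : ℂ)) 1 x := by
        exact Complex.ofRealCLM.hasDerivAt (x := x)
      simpa using (this.const_mul β).add_const (γ * (k : ℂ))
    have hmul := hc.fun_mul ((hξ k x).hasDerivAt)
    rw [hmul.deriv]
    ring
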